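/- Let (X, μ) be a probability space, T : X → X a measure-preserving map, f ∈ L¹(X, μ), and ε > 0. If p ≥ 1 is a natural number with ‖A_p f‖₁ ≤ ε/2, then for every natural number m ≥ p · max(1, ⌈2‖f‖₁/ε⌉) one has ‖A_m f‖₁ ≤ ε. (This gives an explicit modulus of L¹-convergence of the Birkhoff averages from the value of a single average.) -/

import Mathlib

open MeasureTheory Finset

/-- The `n`-th Birkhoff average of `f` along `T`: `Aₙ f = (1/n) ∑_{i<n} f ∘ T^i`. -/
noncomputable def birkhoffAvg {X : Type*} (T : X → X) (f : X → ℝ) (n : ℕ) (x : X) : ℝ :=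
  (n : ℝ)⁻¹ * ∑ i ∈ Finset.range n, f (T^[i] x)

private lemma sum_range_mul_split (g : ℕ → ℝ) (p q : ℕ) :
    ∑ i ∈ Finset.range (p * q), g i = ∑ j ∈ Finset.range q, ∑ i ∈ Finset.range p, g (p * j + i) := by
  induction q with
  | zero => simp
  | succ n ih =>
    rw [Nat.mul_succ, Finset.sum_range_add, ih, Finset.sum_range_succ]

/-- Explicit modulus of `L¹` convergence of Birkhoff averages from the value of a single
average: if `‖A_p f‖₁ ≤ ε/2` then `‖A_m f‖₁ ≤ ε` for every `m ≥ p * max 1 ⌈2‖f‖₁/ε⌉`. -/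
theorem birkhoff_average_L1_effective_convergence {X : Type*} [MeasurableSpace X]
    (μ : Measure X) [IsProbabilityMeasure μ]
    (T : X → X) (hT : MeasurePreserving T μ μ)
    (f : X → ℝ) (hf : Integrable f μ)
    (ε : ℝ) (hε : 0 < ε)
    (p : ℕ) (hp : 1 ≤ p)
    (hAp : ∫ x, |birkhoffAvg T f p x| ∂μ ≤ ε / 2) :
    ∀ m : ℕ, p * max 1 ⌈(2 * ∫ x, |f x| ∂μ) / ε⌉₊ ≤ m →
      ∫ x, |birkhoffAvg T f m x| ∂μ ≤ ε := by
  intro m hm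
  set I : ℝ := ∫ x, |f x| ∂μ with hI
  have hI0 : 0 ≤ I := integral_nonneg (fun x => abs_nonneg _)
  -- basic integrability
  have integk : ∀ k : ℕ, Integrable (fun x => f (T^[k] x)) μ := fun k =>
    ((hT.iterate k).integrable_comp hf.aestronglyMeasurable).mpr hf
  have hA : ∀ n : ℕ, Integrable (birkhoffAvg T f n) μ := by
    intro n
    unfold birkhoffAvg
    exact (integrable_finset_sum _ (fun i _ => integk i)).const_mul _
  -- invariance of integrals
  have hinv : ∀ (k : ℕ) (g : X → ℝ), AEStronglyMeasurable g μ →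
      ∫ x, g (T^[k] x) ∂μ = ∫ x, g x ∂μ := by
    intro k g hg
    have hmk := (hT.iterate k).map_eq
    have h := integral_map (φ := T^[k]) (hT.iterate k).measurable.aemeasurable
      (f := g) (by rwa [hmk])
    rw [hmk] at h
    exact h.symm
  -- positivity of m
  have hm1 : 1 ≤ m := le_trans (le_trans (by simpa using hp) (Nat.le_mul_of_pos_right p
    (lt_of_lt_of_le one_pos (le_max_left _ _)))) hm
  have hm0 : (0 : ℝ) < (m : ℝ) := by exact_mod_cast hm1
  set q : ℕ := m / p with hq
  set r : ℕ := m % p with hr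
  have hmqr : p * q + r = m := Nat.div_add_mod m p
  have hrp : r < p := Nat.mod_lt _ (by omega)
  -- the partial block sums
  set S : ℕ → X → ℝ := fun j x => ∑ i ∈ Finset.range p, f (T^[p * j + i] x) with hS
  have hSint : ∀ j, Integrable (S j) μ := fun j =>
    integrable_finset_sum _ (fun i _ => integk (p * j + i))
  have hSeq : ∀ j x, S j x = (p : ℝ) * birkhoffAvg T f p (T^[p * j] x) := by
    intro j x
    have hp0 : (p : ℝ) ≠ 0 := by positivity
    rw [birkhoffAvg, ← mul_assoc, mul_inv_cancel₀ hp0, one_mul]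
    refine Finset.sum_congr rfl (fun i _ => ?_)
    rw [← Function.iterate_add_apply, add_comm]
  have hSbound : ∀ j, ∫ x, |S j x| ∂μ ≤ (p : ℝ) * (ε / 2) := by
    intro j
    have h1 : ∀ x, |S j x| = (p : ℝ) * |birkhoffAvg T f p (T^[p * j] x)| := by
      intro x
      rw [hSeq j x, abs_mul, abs_of_nonneg (by positivity : (0:ℝ) ≤ (p:ℝ))]
    simp_rw [h1]
    rw [integral_const_mul, hinv (p * j) (fun x => |birkhoffAvg T f p x|)
      (hA p).abs.aestronglyMeasurable]
    exact mul_le_mul_of_nonneg_left hAp (by positivity)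
  -- decompose the Birkhoff sum
  have hdecomp : ∀ x, ∑ i ∈ Finset.range m, f (T^[i] x)
      = ∑ j ∈ Finset.range q, S j x + ∑ i ∈ Finset.range r, f (T^[p * q + i] x) := by
    intro x
    rw [← hmqr, Finset.sum_range_add, sum_range_mul_split]
  -- main estimate on the total sum
  have hbig : ∫ x, |∑ i ∈ Finset.range m, f (T^[i] x)| ∂μ
      ≤ (q : ℝ) * ((p : ℝ) * (ε / 2)) + (r : ℝ) * I := by
    have hIrhs : Integrable (fun x => ∑ j ∈ Finset.range q, |S j x|
        + ∑ i ∈ Finset.range r, |f (T^[p * q + i] x)|) μ :=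
      (integrable_finset_sum _ (fun j _ => (hSint j).abs)).add
        (integrable_finset_sum _ (fun i _ => (integk (p * q + i)).abs))
    have hIlhs : Integrable (fun x => |∑ i ∈ Finset.range m, f (T^[i] x)|) μ :=
      (integrable_finset_sum _ (fun i _ => integk i)).abs
    have step1 : ∫ x, |∑ i ∈ Finset.range m, f (T^[i] x)| ∂μ
        ≤ ∫ x, (∑ j ∈ Finset.range q, |S j x|
          + ∑ i ∈ Finset.range r, |f (T^[p * q + i] x)|) ∂μ := by
      refine integral_mono hIlhs hIrhs (fun x => ?_)
      rw [hdecomp x]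
      calc |∑ j ∈ Finset.range q, S j x + ∑ i ∈ Finset.range r, f (T^[p * q + i] x)|
          ≤ |∑ j ∈ Finset.range q, S j x| + |∑ i ∈ Finset.range r, f (T^[p * q + i] x)| :=
            abs_add_le _ _
        _ ≤ ∑ j ∈ Finset.range q, |S j x| + ∑ i ∈ Finset.range r, |f (T^[p * q + i] x)| :=
            add_le_add (Finset.abs_sum_le_sum_abs _ _) (Finset.abs_sum_le_sum_abs _ _)
    have step2 : ∫ x, (∑ j ∈ Finset.range q, |S j x|
        + ∑ i ∈ Finset.range r, |f (T^[p * q + i] x)|) ∂μ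
        = ∑ j ∈ Finset.range q, ∫ x, |S j x| ∂μ
          + ∑ i ∈ Finset.range r, ∫ x, |f (T^[p * q + i] x)| ∂μ := by
      rw [integral_add (integrable_finset_sum _ (fun j _ => (hSint j).abs))
        (integrable_finset_sum _ (fun i _ => (integk (p * q + i)).abs)),
        integral_finset_sum _ (fun j _ => (hSint j).abs),
        integral_finset_sum _ (fun i _ => (integk (p * q + i)).abs)]
    have step3 : ∑ j ∈ Finset.range q, ∫ x, |S j x| ∂μ ≤ (q : ℝ) * ((p : ℝ) * (ε / 2)) := by
      calc ∑ j ∈ Finset.range q, ∫ x, |S j x| ∂μ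
          ≤ ∑ _j ∈ Finset.range q, (p : ℝ) * (ε / 2) :=
            Finset.sum_le_sum (fun j _ => hSbound j)
        _ = (q : ℝ) * ((p : ℝ) * (ε / 2)) := by simp [mul_comm]
    have step4 : ∑ i ∈ Finset.range r, ∫ x, |f (T^[p * q + i] x)| ∂μ = (r : ℝ) * I := by
      have : ∀ i : ℕ, ∫ x, |f (T^[p * q + i] x)| ∂μ = I := fun i =>
        hinv (p * q + i) (fun x => |f x|) hf.abs.aestronglyMeasurable
      simp [this, mul_comm]
    calc ∫ x, |∑ i ∈ Finset.range m, f (T^[i] x)| ∂μ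
        ≤ _ := step1
      _ = _ := step2
      _ ≤ (q : ℝ) * ((p : ℝ) * (ε / 2)) + (r : ℝ) * I := add_le_add step3 (le_of_eq step4)
  -- rewrite the goal
  have hgoal : ∫ x, |birkhoffAvg T f m x| ∂μ
      = (m : ℝ)⁻¹ * ∫ x, |∑ i ∈ Finset.range m, f (T^[i] x)| ∂μ := by
    unfold birkhoffAvg
    simp_rw [abs_mul, abs_inv, Nat.abs_cast]
    rw [integral_const_mul]
  rw [hgoal]
  -- arithmetic
  have hqp : ((p : ℝ) * q : ℝ) ≤ (m : ℝ) := by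
    exact_mod_cast le_trans (Nat.le_add_right _ r) (le_of_eq hmqr)
  have hrP : (r : ℝ) ≤ (p : ℝ) := by exact_mod_cast hrp.le
  have hpI : (p : ℝ) * I ≤ (m : ℝ) * (ε / 2) := by
    have h1 : (2 * I) / ε ≤ (⌈(2 * I) / ε⌉₊ : ℝ) := Nat.le_ceil _
    have h2 : ((p * max 1 ⌈(2 * I) / ε⌉₊ : ℕ) : ℝ) ≤ (m : ℝ) := by exact_mod_cast hm
    have h3 : (⌈(2 * I) / ε⌉₊ : ℝ) ≤ ((max 1 ⌈(2 * I) / ε⌉₊ : ℕ) : ℝ) := by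
      exact_mod_cast le_max_right 1 _
    have hp0 : (0 : ℝ) < (p : ℝ) := by exact_mod_cast hp
    have h4 : (p : ℝ) * ((2 * I) / ε) ≤ (m : ℝ) := by
      calc (p : ℝ) * ((2 * I) / ε) ≤ (p : ℝ) * ((max 1 ⌈(2 * I) / ε⌉₊ : ℕ) : ℝ) :=
            mul_le_mul_of_nonneg_left (le_trans h1 h3) hp0.le
        _ ≤ (m : ℝ) := by push_cast at h2 ⊢; linarith
    have h5 : (p : ℝ) * ((2 * I) / ε) * (ε / 2) = (p : ℝ) * I := by
      field_simp
    nlinarith [mul_le_mul_of_nonneg_right h4 (by positivity : (0:ℝ) ≤ ε / 2)]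
  rw [inv_mul_le_iff₀ hm0]
  have : (q : ℝ) * ((p : ℝ) * (ε / 2)) ≤ (m : ℝ) * (ε / 2) := by
    rw [← mul_assoc, mul_comm (q : ℝ)]
    exact mul_le_mul_of_nonneg_right hqp (by positivity)
  have h6 : (r : ℝ) * I ≤ (m : ℝ) * (ε / 2) := by
    calc (r : ℝ) * I ≤ (p : ℝ) * I := mul_le_mul_of_nonneg_right hrP hI0
      _ ≤ (m : ℝ) * (ε / 2) := hpI
  calc (∫ x, |∑ i ∈ Finset.range m, f (T^[i] x)| ∂μ)
      ≤ (q : ℝ) * ((p : ℝ) * (ε / 2)) + (r : ℝ) * I := hbig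
    _ ≤ (m : ℝ) * (ε / 2) + (m : ℝ) * (ε / 2) := add_le_add this h6
    _ = (m : ℝ) * ε := by ring
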